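/- arXiv:1511.02391 — 2 statements merged into one kernel-verified Lean document; each statement's English description precedes it below -/
import Mathlib

section
/- Let H be a connected graph of order n with Laplacian eigenvalues μ_1(H) ≥ ... ≥ μ_n(H). Then for every integer k ≥ 1, the algebraic connectivity of the lexicographic power H^k satisfies μ_{n^k − 1}(H^k) = n^{k−1}·μ_{n−1}(H). -/
open Matrix Finset

universe u

/-- The lexicographic product `H[G]` of two simple graphs. -/
def lexProd {α β : Type u} (H : SimpleGraph α) (G : SimpleGraph β) :
    SimpleGraph (α × β) where
  Adj x y := H.Adj x.1 y.1 ∨ (x.1 = y.1 ∧ G.Adj x.2 y.2)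
  symm := ⟨fun x y h => by
    rcases h with h | ⟨h1, h2⟩
    · exact Or.inl (H.adj_symm h)
    · exact Or.inr ⟨h1.symm, G.adj_symm h2⟩⟩
  loopless := ⟨fun x h => by
    rcases h with h | ⟨_, h2⟩
    · exact H.irrefl h
    · exact G.irrefl h2⟩

/-- Vertex type of the iterated lexicographic product `H^k[G]`. -/
def lexIterVert (α β : Type u) : ℕ → Type u
  | 0 => β
  | k + 1 => α × lexIterVert α β k

/-- Iterated lexicographic product: `H^0[G] = G`, `H^k[G] = H[H^{k-1}[G]]`. -/
def lexIter {α β : Type u} (H : SimpleGraph α) (G : SimpleGraph β) :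
    (k : ℕ) → SimpleGraph (lexIterVert α β k)
  | 0 => G
  | k + 1 => lexProd H (lexIter H G k)

instance lexIterVert.instFintype {α β : Type u} [Fintype α] [Fintype β] :
    ∀ k, Fintype (lexIterVert α β k)
  | 0 => inferInstanceAs (Fintype β)
  | k + 1 =>
      letI := lexIterVert.instFintype (α := α) (β := β) k
      inferInstanceAs (Fintype (α × lexIterVert α β k))

/-- Vertex type of the lexicographic power `H^k` (with `H^0 = K_1`). -/
def powVert (α : Type u) : ℕ → Type u
  | 0 => PUnit
  | 1 => α
  | k + 2 => powVert α (k + 1) × α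

/-- Lexicographic powers of a graph: `H^1 = H` and `H^k = H^{k-1}[H]` for `k ≥ 2`. -/
def lexPow {α : Type u} (H : SimpleGraph α) : (k : ℕ) → SimpleGraph (powVert α k)
  | 0 => ⊥
  | 1 => H
  | k + 2 => lexProd (lexPow H (k + 1)) H

instance powVert.instFintype {α : Type u} [Fintype α] : ∀ k, Fintype (powVert α k)
  | 0 => inferInstanceAs (Fintype PUnit)
  | 1 => inferInstanceAs (Fintype α)
  | k + 2 =>
      letI := powVert.instFintype (α := α) (k + 1)
      inferInstanceAs (Fintype (powVert α (k + 1) × α))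

/-- The degree of a vertex. -/
noncomputable def gdeg {α : Type u} [Fintype α] (G : SimpleGraph α) (v : α) : ℕ := by
  classical exact G.degree v

/-- The adjacency spectrum of a graph, as the multiset of roots (eigenvalues, with
multiplicity) of the characteristic polynomial of its adjacency matrix over `ℝ`. -/
noncomputable def adjSpectrum {α : Type u} [Fintype α] (G : SimpleGraph α) : Multiset ℝ := by
  classical exact (Matrix.charpoly (G.adjMatrix ℝ)).roots

/-- The Laplacian spectrum of a graph, as the multiset of roots (eigenvalues, with
multiplicity) of the characteristic polynomial of its Laplacian matrix over `ℝ`. -/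
noncomputable def lapSpectrum {α : Type u} [Fintype α] (G : SimpleGraph α) : Multiset ℝ := by
  classical exact (Matrix.charpoly (G.lapMatrix ℝ)).roots
section MatrixAux
open Polynomial

variable {m : Type u} [Fintype m] [DecidableEq m]

lemma charpoly_conj (A P Q : Matrix m m ℝ) (hQP : Q * P = 1) :
    (Q * A * P).charpoly = A.charpoly := by
  have hscalar : Matrix.scalar m (X : ℝ[X]) = (X : ℝ[X]) • (1 : Matrix m m ℝ[X]) := by
    ext i j
    by_cases h : i = j <;> simp [h, Matrix.scalar_apply, Matrix.diagonal, Matrix.one_apply]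
  have h1 : charmatrix (Q * A * P) =
      (C : ℝ →+* ℝ[X]).mapMatrix Q * charmatrix A * (C : ℝ →+* ℝ[X]).mapMatrix P := by
    unfold charmatrix
    rw [Matrix.mul_sub, Matrix.sub_mul, hscalar]
    congr 1
    · rw [Matrix.mul_smul, Matrix.smul_mul, Matrix.mul_one, ← _root_.map_mul, hQP, _root_.map_one]
    · rw [← _root_.map_mul, ← _root_.map_mul]
  have h2 : ((C : ℝ →+* ℝ[X]).mapMatrix Q).det * ((C : ℝ →+* ℝ[X]).mapMatrix P).det = 1 := by
    rw [← Matrix.det_mul, ← _root_.map_mul, hQP, _root_.map_one, Matrix.det_one]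
  unfold Matrix.charpoly
  rw [h1, Matrix.det_mul, Matrix.det_mul]
  ring_nf
  rw [mul_comm, ← mul_assoc, mul_comm (((C : ℝ →+* ℝ[X]).mapMatrix P).det), h2, one_mul]

lemma charpoly_diagonal (d : m → ℝ) :
    (Matrix.diagonal d).charpoly = ∏ i, (X - C (d i)) := by
  have h : charmatrix (Matrix.diagonal d) = Matrix.diagonal (fun i => X - C (d i)) := by
    ext i j
    by_cases h : i = j
    · subst h; simp
    · simp [h, Matrix.diagonal_apply_ne _ h]
  rw [Matrix.charpoly, h, Matrix.det_diagonal]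

lemma charpoly_blockDiagonal {o : Type u} [Fintype o] [DecidableEq o]
    (M : o → Matrix m m ℝ) :
    (Matrix.blockDiagonal M).charpoly = ∏ j, (M j).charpoly := by
  have h : charmatrix (Matrix.blockDiagonal M) =
      Matrix.blockDiagonal (fun j => charmatrix (M j)) := by
    ext ⟨i, j⟩ ⟨i', j'⟩
    by_cases hj : j = j'
    · subst hj
      by_cases hi : i = i'
      · subst hi; simp [Matrix.blockDiagonal_apply]
      · simp [Matrix.blockDiagonal_apply, charmatrix_apply, Matrix.diagonal_apply, hi,
          Prod.ext_iff]
    · simp [Matrix.blockDiagonal_apply, charmatrix_apply, Matrix.diagonal_apply, hj,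
        Prod.ext_iff]
  rw [Matrix.charpoly, h, Matrix.det_blockDiagonal]
  rfl

lemma isHermitian_conj_diag {A : Matrix m m ℝ} (hA : A.IsHermitian) :
    (star (Matrix.IsHermitian.eigenvectorUnitary hA : Matrix m m ℝ)) * A *
      (Matrix.IsHermitian.eigenvectorUnitary hA : Matrix m m ℝ) =
      Matrix.diagonal hA.eigenvalues := by
  have := hA.conjStarAlgAut_star_eigenvectorUnitary
  rw [Unitary.conjStarAlgAut_star_apply] at this
  rwa [RCLike.ofReal_real_eq_id, Function.id_comp] at this

lemma charpoly_smul_isHermitian {A : Matrix m m ℝ} (hA : A.IsHermitian) (c : ℝ) :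
    (c • A).charpoly = ∏ i, (X - C (c * hA.eigenvalues i)) := by
  set U := (Matrix.IsHermitian.eigenvectorUnitary hA : Matrix m m ℝ) with hU
  have h1 : star U * U = 1 := Unitary.coe_star_mul_self _
  have key : star U * (c • A) * U = Matrix.diagonal (fun i => c * hA.eigenvalues i) := by
    rw [Matrix.mul_smul, Matrix.smul_mul, isHermitian_conj_diag hA]
    ext i j
    by_cases h : i = j <;> simp [h, Matrix.diagonal]
  calc (c • A).charpoly = (star U * (c • A) * U).charpoly :=
        (charpoly_conj _ _ _ h1).symm
    _ = _ := by rw [key, _root_.charpoly_diagonal]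

lemma charpoly_isHermitian {A : Matrix m m ℝ} (hA : A.IsHermitian) :
    A.charpoly = ∏ i, (X - C (hA.eigenvalues i)) := by
  have := charpoly_smul_isHermitian hA 1
  simpa using this

omit [DecidableEq m] in
lemma roots_prod_X_sub_C' (μ : m → ℝ) :
    (∏ i, (X - C (μ i))).roots = Multiset.map μ Finset.univ.val := by
  have : (∏ i, (X - C (μ i))) =
      ((Multiset.map μ Finset.univ.val).map fun a => X - C a).prod := by
    rw [Multiset.map_map]
    rfl
  rw [this, Polynomial.roots_multiset_prod_X_sub_C]

omit [DecidableEq m] in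
lemma dot_mulVec_left (A : Matrix m m ℝ) (u v : m → ℝ) :
    (A *ᵥ u) ⬝ᵥ v = u ⬝ᵥ (Aᵀ *ᵥ v) := by
  rw [dotProduct_comm, Matrix.dotProduct_mulVec, dotProduct_comm,
    Matrix.mulVec_transpose]

end MatrixAux

section GraphAux
open Polynomial

variable {V : Type u} [Fintype V]

lemma lapSpectrum_def (G : SimpleGraph V) [DecidableEq V] [DecidableRel G.Adj] :
    lapSpectrum G = (Matrix.charpoly (G.lapMatrix ℝ)).roots := by
  unfold lapSpectrum
  congr!

lemma gdeg_def (G : SimpleGraph V) [DecidableRel G.Adj] (v : V) :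
    gdeg G v = G.degree v := by
  unfold gdeg
  congr!

lemma lexProd_adj {β α : Type u} (Hb : SimpleGraph β) (H : SimpleGraph α) (p q : β × α) :
    (lexProd Hb H).Adj p q ↔ Hb.Adj p.1 q.1 ∨ (p.1 = q.1 ∧ H.Adj p.2 q.2) := Iff.rfl

lemma lexProd_degree {β α : Type u} [Fintype β] [Fintype α] [DecidableEq β] [DecidableEq α]
    (Hb : SimpleGraph β) (H : SimpleGraph α) [DecidableRel Hb.Adj] [DecidableRel H.Adj]
    [DecidableRel (lexProd Hb H).Adj] (x : β) (y : α) :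
    (lexProd Hb H).degree (x, y) = Fintype.card α * Hb.degree x + H.degree y := by
  have hN : (lexProd Hb H).neighborFinset (x, y) =
      (Hb.neighborFinset x ×ˢ (univ : Finset α)) ∪ ({x} ×ˢ H.neighborFinset y) := by
    ext ⟨a, b⟩
    simp only [SimpleGraph.mem_neighborFinset, lexProd_adj, Finset.mem_union, Finset.mem_product,
      Finset.mem_singleton, Finset.mem_univ, and_true]
    constructor
    · rintro (h | ⟨h1, h2⟩)
      · exact Or.inl h
      · exact Or.inr ⟨h1.symm, h2⟩
    · rintro (h | ⟨h1, h2⟩)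
      · exact Or.inl h
      · exact Or.inr ⟨h1.symm, h2⟩
  have hdisj : Disjoint ((Hb.neighborFinset x) ×ˢ (univ : Finset α))
      ({x} ×ˢ H.neighborFinset y) := by
    rw [Finset.disjoint_left]
    rintro ⟨a, b⟩ h1 h2
    rw [Finset.mem_product] at h1 h2
    rw [Finset.mem_singleton] at h2
    rw [SimpleGraph.mem_neighborFinset] at h1
    exact Hb.irrefl (h2.1 ▸ h1.1)
  rw [SimpleGraph.degree, hN, Finset.card_union_of_disjoint hdisj, Finset.card_product,
    Finset.card_product, Finset.card_singleton, Finset.card_univ, one_mul]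
  rw [SimpleGraph.degree, SimpleGraph.degree, mul_comm]

end GraphAux

section Spectral
open Polynomial

lemma unitary_facts {α : Type u} [Fintype α] [DecidableEq α] (H : SimpleGraph α)
    [DecidableRel H.Adj] (hconn : H.Connected) :
    ∃ (U : Matrix α α ℝ) (μ : α → ℝ) (j0 : α),
      Uᵀ * U = 1 ∧ U * Uᵀ = 1 ∧ Uᵀ * (H.lapMatrix ℝ) * U = Matrix.diagonal μ ∧
      μ j0 = 0 ∧ (∀ j, 0 ≤ μ j) ∧
      lapSpectrum H = Multiset.map μ Finset.univ.val ∧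
      (∀ j, j ≠ j0 → (∑ i, U i j) = 0) ∧
      ((∑ i, U i j0) ^ 2 = (Fintype.card α : ℝ)) ∧
      (∃ c : ℝ, ∀ i, U i j0 = c) := by
  classical
  have hne : Nonempty α := hconn.nonempty
  have hn0 : 0 < (Fintype.card α : ℝ) := by exact_mod_cast Fintype.card_pos
  set L := H.lapMatrix ℝ with hLdef
  have hL : L.IsHermitian := (H.posSemidef_lapMatrix ℝ).1
  set U := (Matrix.IsHermitian.eigenvectorUnitary hL : Matrix α α ℝ) with hUdef
  set μ := hL.eigenvalues with hμdef
  have hstar : star U = Uᵀ := by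
    rw [Matrix.star_eq_conjTranspose, Matrix.conjTranspose_eq_transpose_of_trivial]
  have h1 : Uᵀ * U = 1 := by rw [← hstar]; exact Unitary.coe_star_mul_self _
  have h2 : U * Uᵀ = 1 := by rw [← hstar]; exact Unitary.coe_mul_star_self _
  have hdiag : Uᵀ * L * U = Matrix.diagonal μ := by
    rw [← hstar]; exact isHermitian_conj_diag hL
  have hspec : lapSpectrum H = Multiset.map μ Finset.univ.val := by
    rw [lapSpectrum_def, charpoly_isHermitian hL, roots_prod_X_sub_C']
  have hnonneg : ∀ j, 0 ≤ μ j := fun j => (H.posSemidef_lapMatrix ℝ).eigenvalues_nonneg j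
  set w : α → ℝ := fun j => ∑ i, U i j with hwdef
  have hLo : L *ᵥ (fun _ => (1:ℝ)) = 0 := SimpleGraph.lapMatrix_mulVec_const_eq_zero H
  have hw : Uᵀ *ᵥ (fun _ => (1:ℝ)) = w := by
    funext j; simp [Matrix.mulVec, dotProduct, hwdef, Matrix.transpose_apply]
  have hμw : ∀ j, μ j * w j = 0 := by
    intro j
    have hz : Matrix.diagonal μ *ᵥ w = 0 := by
      rw [← hdiag, ← hw, Matrix.mulVec_mulVec]
      have hassoc : (Uᵀ * L * U) * Uᵀ = Uᵀ * L := by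
        rw [mul_assoc, h2, mul_one]
      rw [hassoc, ← Matrix.mulVec_mulVec, hLo, Matrix.mulVec_zero]
    have := congrFun hz j
    simpa [Matrix.mulVec_diagonal] using this
  have horth : ∀ j j', (∑ i, U i j * U i j') = if j = j' then (1:ℝ) else 0 := by
    intro j j'
    have := congrFun (congrFun h1 j) j'
    simpa [Matrix.mul_apply, Matrix.one_apply, Matrix.transpose_apply] using this
  have horthrow : ∀ i i', (∑ j, U i j * U i' j) = if i = i' then (1:ℝ) else 0 := by
    intro i i'
    have := congrFun (congrFun h2 i) i'
    simpa [Matrix.mul_apply, Matrix.one_apply, Matrix.transpose_apply] using this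
  have hwsum : ∑ j, w j ^ 2 = (Fintype.card α : ℝ) := by
    have step : ∀ j, w j ^ 2 = ∑ i, ∑ i', U i j * U i' j := by
      intro j
      rw [sq, hwdef, Finset.sum_mul_sum]
    calc ∑ j, w j ^ 2 = ∑ j, ∑ i, ∑ i', U i j * U i' j :=
          Finset.sum_congr rfl fun j _ => step j
      _ = ∑ i, ∑ j, ∑ i', U i j * U i' j := Finset.sum_comm
      _ = ∑ i, ∑ i', ∑ j, U i j * U i' j := Finset.sum_congr rfl fun i _ => Finset.sum_comm
      _ = ∑ i, ∑ i', if i = i' then (1:ℝ) else 0 :=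
          Finset.sum_congr rfl fun i _ => Finset.sum_congr rfl fun i' _ => horthrow i i'
      _ = ∑ i : α, (1:ℝ) := by simp
      _ = _ := by simp
  have hLU : L * U = U * Matrix.diagonal μ := by
    calc L * U = (U * Uᵀ) * L * U := by rw [h2, one_mul]
      _ = U * (Uᵀ * L * U) := by simp only [mul_assoc]
      _ = U * Matrix.diagonal μ := by rw [hdiag]
  have hcol : ∀ j, μ j = 0 → ∃ c, ∀ i, U i j = c := by
    intro j hj
    have hv : L *ᵥ (fun i => U i j) = 0 := by
      funext i
      have h1' : (L *ᵥ (fun i => U i j)) i = (L * U) i j := by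
        simp [Matrix.mulVec, dotProduct, Matrix.mul_apply]
      rw [Pi.zero_apply, h1', hLU, Matrix.mul_diagonal, hj, mul_zero]
    have hreach := (SimpleGraph.lapMatrix_mulVec_eq_zero_iff_forall_reachable (G := H)
      (x := fun i => U i j)).mp hv
    refine ⟨U (Classical.arbitrary α) j, fun i => ?_⟩
    exact hreach i (Classical.arbitrary α) (hconn.preconnected i (Classical.arbitrary α))
  obtain ⟨j0, hwj0⟩ : ∃ j, w j ≠ 0 := by
    by_contra h
    push_neg at h
    have : ∑ j, w j ^ 2 = 0 := by simp [h]
    rw [this] at hwsum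
    linarith
  have hμj0 : μ j0 = 0 := by
    rcases mul_eq_zero.mp (hμw j0) with h | h
    · exact h
    · exact absurd h hwj0
  have hwzero : ∀ j, j ≠ j0 → w j = 0 := by
    intro j hj
    by_contra hwj
    have hμj : μ j = 0 := by
      rcases mul_eq_zero.mp (hμw j) with h | h
      · exact h
      · exact absurd h hwj
    obtain ⟨c, hc⟩ := hcol j hμj
    obtain ⟨c0, hc0⟩ := hcol j0 hμj0
    have hnorm : (Fintype.card α : ℝ) * (c * c) = 1 := by
      have h' := horth j j
      rw [Finset.sum_congr rfl (fun i _ => by rw [hc i])] at h'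
      rw [Finset.sum_const, Finset.card_univ, nsmul_eq_mul] at h'
      simpa using h'
    have hcross : (Fintype.card α : ℝ) * (c * c0) = 0 := by
      have h' := horth j j0
      rw [Finset.sum_congr rfl (fun i _ => by rw [hc i, hc0 i])] at h'
      rw [Finset.sum_const, Finset.card_univ, nsmul_eq_mul] at h'
      simpa [hj] using h'
    have hcc0 : c * c0 = 0 := by
      rcases mul_eq_zero.mp hcross with h | h
      · exact absurd h (ne_of_gt hn0)
      · exact h
    rcases mul_eq_zero.mp hcc0 with h | h
    · rw [h] at hnorm; simp at hnorm
    · have hnorm0 : (Fintype.card α : ℝ) * (c0 * c0) = 1 := by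
        have h' := horth j0 j0
        rw [Finset.sum_congr rfl (fun i _ => by rw [hc0 i])] at h'
        rw [Finset.sum_const, Finset.card_univ, nsmul_eq_mul] at h'
        simpa using h'
      rw [h] at hnorm0; simp at hnorm0
  have hwn : w j0 ^ 2 = (Fintype.card α : ℝ) := by
    rw [← hwsum]
    symm
    apply Finset.sum_eq_single j0
    · intro j _ hj
      rw [hwzero j hj]
      ring
    · intro h
      exact absurd (Finset.mem_univ j0) h
  exact ⟨U, μ, j0, h1, h2, hdiag, hμj0, hnonneg, hspec,
    fun j hj => hwzero j hj, hwn, hcol j0 hμj0⟩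

lemma rayleigh_bound {α : Type u} [Fintype α] [DecidableEq α] (H : SimpleGraph α)
    [DecidableRel H.Adj] (U : Matrix α α ℝ) (μ : α → ℝ) (j0 : α)
    (h2 : U * Uᵀ = 1)
    (hdiag : Uᵀ * (H.lapMatrix ℝ) * U = Matrix.diagonal μ)
    (hc0 : ∃ c : ℝ, ∀ i, U i j0 = c)
    (b : ℝ) (hb : ∀ j, j ≠ j0 → b ≤ μ j) (v : α) :
    b * ((Fintype.card α : ℝ) - 1) ≤ (Fintype.card α : ℝ) * (H.degree v) := by
  classical
  set n : ℝ := (Fintype.card α : ℝ) with hndef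
  have hnα : Nonempty α := ⟨v⟩
  have hn0 : 0 < n := by rw [hndef]; exact_mod_cast Fintype.card_pos
  set L := H.lapMatrix ℝ with hLdef
  set x : α → ℝ := fun i => (if i = v then 1 else 0) - 1/n with hxdef
  set y : α → ℝ := Uᵀ *ᵥ x with hydef
  have hxy : U *ᵥ y = x := by rw [hydef, Matrix.mulVec_mulVec, h2, Matrix.one_mulVec]
  have hyy : y ⬝ᵥ y = x ⬝ᵥ x := by
    calc y ⬝ᵥ y = (Uᵀ *ᵥ x) ⬝ᵥ y := by rw [← hydef]
      _ = x ⬝ᵥ (Uᵀᵀ *ᵥ y) := dot_mulVec_left _ _ _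
      _ = x ⬝ᵥ x := by rw [Matrix.transpose_transpose, hxy]
  have hquad : x ⬝ᵥ (L *ᵥ x) = y ⬝ᵥ (Matrix.diagonal μ *ᵥ y) := by
    conv_lhs => rw [← hxy]
    calc (U *ᵥ y) ⬝ᵥ (L *ᵥ (U *ᵥ y)) = y ⬝ᵥ (Uᵀ *ᵥ (L *ᵥ (U *ᵥ y))) :=
          dot_mulVec_left U y _
      _ = y ⬝ᵥ ((Uᵀ * L * U) *ᵥ y) := by
          rw [Matrix.mulVec_mulVec, Matrix.mulVec_mulVec]
      _ = y ⬝ᵥ (Matrix.diagonal μ *ᵥ y) := by rw [hdiag]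
  have hyj0 : y j0 = 0 := by
    obtain ⟨c, hc⟩ := hc0
    have hxsum : ∑ i, x i = 0 := by
      rw [hxdef]
      rw [Finset.sum_sub_distrib]
      rw [Finset.sum_ite_eq' Finset.univ v (fun _ => (1:ℝ))]
      simp [Finset.card_univ]
      try field_simp
      simp [hndef]
    have hy0 : y j0 = ∑ i, U i j0 * x i := by
      simp [hydef, Matrix.mulVec, dotProduct, Matrix.transpose_apply]
    rw [hy0, Finset.sum_congr rfl (fun i _ => by rw [hc i]), ← Finset.mul_sum, hxsum, mul_zero]
  have hLx : L *ᵥ x = L *ᵥ (fun i => if i = v then 1 else 0) := by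
    have hx' : x = (fun i => if i = v then (1:ℝ) else 0) - (1/n) • (fun _ => (1:ℝ)) := by
      funext i; simp [hxdef]
    rw [hx', Matrix.mulVec_sub, Matrix.mulVec_smul,
      SimpleGraph.lapMatrix_mulVec_const_eq_zero, smul_zero, sub_zero]
  have hsymm : ∀ i, L i v = L v i := by
    intro i
    have h := H.isSymm_lapMatrix (R := ℝ)
    have h' := congrFun (congrFun h i) v
    exact h'.symm
  have hrow : ∑ i, L v i = 0 := by
    have := congrFun (SimpleGraph.lapMatrix_mulVec_const_eq_zero H (R := ℝ)) v
    simpa [Matrix.mulVec, dotProduct] using this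
  have hdiagv : L v v = (H.degree v : ℝ) := by
    simp [hLdef, SimpleGraph.lapMatrix, SimpleGraph.degMatrix]
  have hLval : x ⬝ᵥ (L *ᵥ x) = (H.degree v : ℝ) := by
    rw [hLx]
    have he : (L *ᵥ (fun i => if i = v then (1:ℝ) else 0)) = fun i => L i v := by
      funext i
      simp [Matrix.mulVec, dotProduct]
    rw [he]
    show ∑ i, x i * L i v = (H.degree v : ℝ)
    calc ∑ i, x i * L i v
        = ∑ i, ((if i = v then 1 else 0) * L i v - (1/n) * L i v) := by
          apply Finset.sum_congr rfl
          intro i _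
          rw [hxdef]
          ring
      _ = L v v - (1/n) * ∑ i, L i v := by
          rw [Finset.sum_sub_distrib, ← Finset.mul_sum]
          congr 1
          simp
      _ = (H.degree v : ℝ) := by
          rw [Finset.sum_congr rfl (fun i _ => hsymm i), hrow, hdiagv]
          ring
  have hxx : x ⬝ᵥ x = 1 - 1/n := by
    have hterm : ∀ i, x i * x i =
        (if i = v then (1:ℝ) else 0) - 2*(1/n)*(if i = v then 1 else 0) + (1/n)^2 := by
      intro i
      by_cases h : i = v <;> simp [hxdef, h] <;> ring
    calc x ⬝ᵥ x = ∑ i, x i * x i := rfl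
      _ = ∑ i, ((if i = v then (1:ℝ) else 0) - 2*(1/n)*(if i = v then 1 else 0) + (1/n)^2) :=
          Finset.sum_congr rfl fun i _ => hterm i
      _ = 1 - 1/n := by
          rw [Finset.sum_add_distrib, Finset.sum_sub_distrib]
          rw [Finset.sum_ite_eq' Finset.univ v (fun _ => (1:ℝ))]
          rw [← Finset.mul_sum, Finset.sum_ite_eq' Finset.univ v (fun _ => (1:ℝ))]
          simp [Finset.card_univ]
          field_simp
          try ring
  have hineq : b * (y ⬝ᵥ y) ≤ y ⬝ᵥ (Matrix.diagonal μ *ᵥ y) := by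
    have hr : y ⬝ᵥ (Matrix.diagonal μ *ᵥ y) = ∑ j, μ j * y j ^ 2 := by
      show ∑ j, y j * (Matrix.diagonal μ *ᵥ y) j = _
      apply Finset.sum_congr rfl
      intro j _
      rw [Matrix.mulVec_diagonal]
      ring
    have hl : b * (y ⬝ᵥ y) = ∑ j, b * y j ^ 2 := by
      show b * ∑ j, y j * y j = _
      rw [Finset.mul_sum]
      apply Finset.sum_congr rfl
      intro j _
      ring
    rw [hr, hl]
    apply Finset.sum_le_sum
    intro j _
    by_cases hj : j = j0
    · subst hj
      rw [hyj0]
      simp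
    · have := hb j hj
      nlinarith [sq_nonneg (y j)]
  have hfinal : b * (1 - 1/n) ≤ (H.degree v : ℝ) := by
    calc b * (1 - 1/n) = b * (y ⬝ᵥ y) := by rw [hyy, hxx]
      _ ≤ y ⬝ᵥ (Matrix.diagonal μ *ᵥ y) := hineq
      _ = x ⬝ᵥ (L *ᵥ x) := hquad.symm
      _ = _ := hLval
  have hmul := mul_le_mul_of_nonneg_left hfinal (le_of_lt hn0)
  calc b * (n - 1) = n * (b * (1 - 1/n)) := by field_simp; try ring
    _ ≤ n * (H.degree v : ℝ) := hmul

end Spectral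

section LexSpec
open Polynomial Kronecker

lemma lexProd_lapMatrix {β α : Type u} [Fintype β] [Fintype α] [DecidableEq β] [DecidableEq α]
    (Hb : SimpleGraph β) (H : SimpleGraph α) [DecidableRel Hb.Adj] [DecidableRel H.Adj]
    [DecidableRel (lexProd Hb H).Adj] :
    (lexProd Hb H).lapMatrix ℝ =
      (Fintype.card α : ℝ) • ((Matrix.diagonal fun x => (Hb.degree x : ℝ)) ⊗ₖ (1 : Matrix α α ℝ))
      + ((1 : Matrix β β ℝ) ⊗ₖ H.lapMatrix ℝ)
      - (Hb.adjMatrix ℝ ⊗ₖ Matrix.of (fun _ _ : α => (1:ℝ))) := by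
  ext ⟨x, j⟩ ⟨x', j'⟩
  have hLHS : (lexProd Hb H).lapMatrix ℝ (x, j) (x', j') =
      (if (x, j) = (x', j') then ((lexProd Hb H).degree (x, j) : ℝ) else 0)
      - (if Hb.Adj x x' ∨ (x = x' ∧ H.Adj j j') then 1 else 0) := by
    rw [SimpleGraph.lapMatrix]
    simp only [Matrix.sub_apply, SimpleGraph.degMatrix, Matrix.diagonal_apply,
      SimpleGraph.adjMatrix_apply]
    congr 1
    exact if_congr (lexProd_adj Hb H (x, j) (x', j')) rfl rfl
  rw [hLHS]
  simp only [Matrix.sub_apply, Matrix.add_apply, Matrix.smul_apply, Matrix.kroneckerMap_apply,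
    SimpleGraph.adjMatrix_apply, Matrix.diagonal_apply, Matrix.one_apply, Matrix.of_apply,
    smul_eq_mul, SimpleGraph.lapMatrix, SimpleGraph.degMatrix]
  by_cases hx : x = x'
  · subst hx
    by_cases hj : j = j'
    · subst hj
      rw [if_pos rfl, if_pos rfl, if_pos rfl, if_pos rfl, lexProd_degree Hb H x j]
      have : ¬ (Hb.Adj x x ∨ (x = x ∧ H.Adj j j)) := by
        rintro (h | ⟨-, h⟩)
        · exact Hb.irrefl h
        · exact H.irrefl h
      rw [if_neg this]
      push_cast
      simp
    · have hne : ((x, j) : β × α) ≠ (x, j') := by simp [hj]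
      rw [if_neg hne, if_pos rfl, if_neg hj, if_neg (fun h : Hb.Adj x x => Hb.irrefl h)]
      have : (Hb.Adj x x ∨ (x = x ∧ H.Adj j j')) ↔ H.Adj j j' := by
        constructor
        · rintro (h | ⟨-, h⟩)
          · exact absurd h Hb.irrefl
          · exact h
        · exact fun h => Or.inr ⟨rfl, h⟩
      rw [if_congr this rfl rfl]
      simp [hj]
  · have hne : ((x, j) : β × α) ≠ (x', j') := by simp [hx]
    rw [if_neg hne]
    have hOr : (Hb.Adj x x' ∨ (x = x' ∧ H.Adj j j')) ↔ Hb.Adj x x' := by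
      constructor
      · rintro (h | ⟨h, -⟩)
        · exact h
        · exact absurd h hx
      · exact fun h => Or.inl h
    rw [if_congr hOr rfl rfl]
    simp [hx]

lemma lexProd_lapSpectrum {β α : Type u} [Fintype β] [Fintype α] [DecidableEq α] [DecidableEq β]
    (Hb : SimpleGraph β) (H : SimpleGraph α) [DecidableRel Hb.Adj] [DecidableRel H.Adj]
    (U : Matrix α α ℝ) (μ : α → ℝ) (j0 : α)
    (h1 : Uᵀ * U = 1)
    (hdiag : Uᵀ * (H.lapMatrix ℝ) * U = Matrix.diagonal μ)
    (hμj0 : μ j0 = 0)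
    (hwz : ∀ j, j ≠ j0 → (∑ i, U i j) = 0)
    (hwn : ((∑ i, U i j0) ^ 2 = (Fintype.card α : ℝ))) :
    lapSpectrum (lexProd Hb H) =
      Multiset.map (fun t => (Fintype.card α : ℝ) * t) (lapSpectrum Hb) +
      ((Finset.univ.erase j0).val.bind fun j =>
        Multiset.map (fun x : β => (Fintype.card α : ℝ) * (Hb.degree x) + μ j)
          Finset.univ.val) := by
  classical
  set n : ℝ := (Fintype.card α : ℝ) with hndef
  set L2 := (lexProd Hb H).lapMatrix ℝ with hL2def
  set Db : Matrix β β ℝ := Matrix.diagonal fun x => (Hb.degree x : ℝ) with hDbdef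
  set Ab := Hb.adjMatrix ℝ with hAbdef
  set w : α → ℝ := fun j => ∑ i, U i j with hwdef
  have hwz' : ∀ j, j ≠ j0 → w j = 0 := hwz
  have hwn' : w j0 ^ 2 = n := hwn
  set P : Matrix (β × α) (β × α) ℝ := (1 : Matrix β β ℝ) ⊗ₖ U with hPdef
  set Q : Matrix (β × α) (β × α) ℝ := (1 : Matrix β β ℝ) ⊗ₖ Uᵀ with hQdef
  have hQP : Q * P = 1 := by
    rw [hQdef, hPdef, ← Matrix.mul_kronecker_mul, Matrix.one_mul, h1, Matrix.one_kronecker_one]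
  have hJ : Uᵀ * Matrix.of (fun _ _ : α => (1:ℝ)) * U = Matrix.vecMulVec w w := by
    ext j j'
    rw [Matrix.mul_apply, Matrix.vecMulVec_apply]
    have hcol : ∀ i', (Uᵀ * Matrix.of (fun _ _ : α => (1:ℝ))) j i' = w j := by
      intro i'
      rw [Matrix.mul_apply]
      simp [Matrix.transpose_apply, hwdef]
    rw [Finset.sum_congr rfl (fun i' _ => by rw [hcol i'])]
    rw [← Finset.mul_sum]
  have hvw : Matrix.vecMulVec w w = Matrix.diagonal (fun j => if j = j0 then n else 0) := by
    ext j j'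
    rw [Matrix.vecMulVec_apply, Matrix.diagonal_apply]
    by_cases hj : j = j0
    · by_cases hj' : j' = j0
      · rw [hj, hj', ← sq, if_pos rfl, if_pos rfl]
        exact hwn'
      · have hne : j ≠ j' := by rw [hj]; exact fun hh => hj' hh.symm
        rw [hwz' j' hj', mul_zero, if_neg hne]
    · rw [hwz' j hj, zero_mul]
      by_cases hjj : j = j'
      · rw [if_pos hjj, if_neg hj]
      · rw [if_neg hjj]
  set B : α → Matrix β β ℝ := fun j => n • Db + μ j • (1 : Matrix β β ℝ) -
      (if j = j0 then n else 0) • Ab with hBdef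
  have hconj : Q * L2 * P = Matrix.blockDiagonal B := by
    rw [hL2def, lexProd_lapMatrix Hb H]
    rw [← hDbdef, ← hAbdef, ← hndef]
    rw [Matrix.mul_sub, Matrix.mul_add, Matrix.sub_mul, Matrix.add_mul]
    have e1 : Q * ((n • (Db ⊗ₖ (1 : Matrix α α ℝ)))) * P = n • (Db ⊗ₖ (1 : Matrix α α ℝ)) := by
      rw [Matrix.mul_smul, Matrix.smul_mul, hQdef, hPdef, ← Matrix.mul_kronecker_mul,
        ← Matrix.mul_kronecker_mul]
      simp only [Matrix.one_mul, Matrix.mul_one]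
      rw [h1]
    have e2 : Q * ((1 : Matrix β β ℝ) ⊗ₖ H.lapMatrix ℝ) * P =
        (1 : Matrix β β ℝ) ⊗ₖ Matrix.diagonal μ := by
      rw [hQdef, hPdef, ← Matrix.mul_kronecker_mul, ← Matrix.mul_kronecker_mul]
      simp only [Matrix.one_mul, Matrix.mul_one]
      rw [hdiag]
    have e3 : Q * (Ab ⊗ₖ Matrix.of (fun _ _ : α => (1:ℝ))) * P =
        Ab ⊗ₖ Matrix.diagonal (fun j => if j = j0 then n else 0) := by
      rw [hQdef, hPdef, ← Matrix.mul_kronecker_mul, ← Matrix.mul_kronecker_mul]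
      simp only [Matrix.one_mul, Matrix.mul_one]
      rw [hJ, hvw]
    rw [e1, e2, e3]
    ext ⟨x, jj⟩ ⟨x', jj'⟩
    simp only [Matrix.sub_apply, Matrix.add_apply, Matrix.smul_apply, Matrix.kroneckerMap_apply,
      Matrix.blockDiagonal_apply, hBdef, Matrix.one_apply, Matrix.diagonal_apply, smul_eq_mul]
    by_cases hj : jj = jj'
    · subst hj
      simp [mul_comm]
    · simp [hj]
  have hmono : ∀ j, (B j).charpoly.Monic := fun j => Matrix.charpoly_monic _
  have hcp : L2.charpoly = ∏ j, (B j).charpoly := by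
    rw [show L2.charpoly = (Q * L2 * P).charpoly from (charpoly_conj _ _ _ hQP).symm, hconj,
      charpoly_blockDiagonal]
  have hprod_ne : (∏ j ∈ Finset.univ.erase j0, (B j).charpoly) ≠ 0 :=
    (Polynomial.monic_prod_of_monic _ _ (fun j _ => hmono j)).ne_zero
  rw [lapSpectrum_def, hcp, ← Finset.mul_prod_erase Finset.univ _ (Finset.mem_univ j0),
    Polynomial.roots_mul (mul_ne_zero (hmono j0).ne_zero hprod_ne),
    Polynomial.roots_prod _ _ hprod_ne]
  congr 1
  · have hBj0 : B j0 = n • (Hb.lapMatrix ℝ) := by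
      rw [hBdef]
      simp only [if_pos rfl, hμj0, zero_smul, add_zero, SimpleGraph.lapMatrix, smul_sub]
      rfl
    rw [hBj0, charpoly_smul_isHermitian (Hb.posSemidef_lapMatrix ℝ).1, roots_prod_X_sub_C',
      lapSpectrum_def Hb, charpoly_isHermitian (Hb.posSemidef_lapMatrix ℝ).1,
      roots_prod_X_sub_C', Multiset.map_map]
    rfl
  · apply Multiset.bind_congr
    intro j hj
    have hjne : j ≠ j0 := (Finset.mem_erase.mp (Finset.mem_val.mp hj)).1
    have hBj : B j = Matrix.diagonal (fun x : β => n * (Hb.degree x) + μ j) := by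
      rw [hBdef, hDbdef, hAbdef]
      ext x x'
      by_cases h : x = x'
      · subst h
        simp [Matrix.diagonal_apply_eq, hjne]
      · simp [Matrix.diagonal_apply_ne _ h, h, Matrix.one_apply, hjne]
    rw [hBj, _root_.charpoly_diagonal, roots_prod_X_sub_C']

end LexSpec

section SecondSmallest

lemma second_smallest {N : ℕ} (hN : 2 ≤ N) (f : Fin N → ℝ) (hf : Antitone f)
    (T : Multiset ℝ) (c : ℝ) (hS0 : Multiset.map f Finset.univ.val = 0 ::ₘ T)
    (hc : c ∈ T) (hT : ∀ t ∈ T, c ≤ t) (hc0 : 0 ≤ c) :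
    f ⟨N - 2, by omega⟩ = c := by
  classical
  set S := Multiset.map f Finset.univ.val with hSdef
  have hS : S = 0 ::ₘ T := hS0
  have hmem : ∀ x : ℝ, x ∈ S ↔ ∃ i, f i = x := by
    intro x
    rw [hSdef]
    simp [Multiset.mem_map, List.mem_ofFn]
  have hnonneg : ∀ x ∈ S, (0:ℝ) ≤ x := by
    intro x hx
    rw [hS] at hx
    rcases Multiset.mem_cons.mp hx with h | h
    · simp [h]
    · exact le_trans hc0 (hT x h)
  set last : Fin N := ⟨N - 1, by omega⟩ with hlastdef
  set i2 : Fin N := ⟨N - 2, by omega⟩ with hi2def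
  have hlastval : (last : ℕ) = N - 1 := rfl
  have hi2val : (i2 : ℕ) = N - 2 := rfl
  have hi2last : i2 ≠ last := by
    intro h
    have := congrArg Fin.val h
    rw [hi2val, hlastval] at this
    omega
  have hlast_le : ∀ i, f last ≤ f i := by
    intro i
    apply hf
    rw [Fin.le_def, hlastval]
    have := i.isLt
    omega
  have hflast : f last = 0 := by
    have h0S : (0:ℝ) ∈ S := by rw [hS]; exact Multiset.mem_cons_self _ _
    obtain ⟨i0, hi0⟩ := (hmem 0).mp h0S
    have h1 : f last ≤ 0 := hi0 ▸ hlast_le i0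
    have h2 : 0 ≤ f last := hnonneg _ ((hmem _).mpr ⟨last, rfl⟩)
    linarith
  have hi2_le : ∀ i, i ≠ last → f i2 ≤ f i := by
    intro i hi
    apply hf
    rw [Fin.le_def, hi2val]
    have h1 := i.isLt
    have h2 : (i : ℕ) ≠ N - 1 := by
      intro h
      apply hi
      apply Fin.ext
      rw [h, hlastval]
    omega
  have hcount_eq : Multiset.count (0:ℝ) S =
      (Finset.filter (fun a => (0:ℝ) = f a) Finset.univ).card := by
    rw [hSdef, Multiset.count_map]
    rfl
  by_cases hczero : c = 0
  · have hcount : 2 ≤ Multiset.count (0:ℝ) S := by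
      rw [hS, Multiset.count_cons_self]
      have : 0 < Multiset.count (0:ℝ) T := Multiset.count_pos.mpr (hczero ▸ hc)
      omega
    rw [hcount_eq] at hcount
    have h1lt : 1 < (Finset.filter (fun a => (0:ℝ) = f a) Finset.univ).card := by omega
    obtain ⟨a, ha, b, hb, hab⟩ := Finset.one_lt_card.mp h1lt
    have haval : f a = 0 := ((Finset.mem_filter.mp ha).2).symm
    have hbval : f b = 0 := ((Finset.mem_filter.mp hb).2).symm
    have hkey : ∃ i, i ≠ last ∧ f i = 0 := by
      by_cases h : a = last
      · exact ⟨b, fun hh => hab (h ▸ hh ▸ rfl), hbval⟩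
      · exact ⟨a, h, haval⟩
    obtain ⟨i, hi, hival⟩ := hkey
    have h1 : f i2 ≤ 0 := hival ▸ hi2_le i hi
    have h2 : 0 ≤ f i2 := hnonneg _ ((hmem _).mpr ⟨i2, rfl⟩)
    rw [hczero]
    have : f i2 = 0 := le_antisymm h1 h2
    exact this
  · have hcpos : 0 < c := lt_of_le_of_ne hc0 (Ne.symm hczero)
    have hcS : c ∈ S := by rw [hS]; exact Multiset.mem_cons_of_mem hc
    obtain ⟨ic, hic⟩ := (hmem c).mp hcS
    have hicne : ic ≠ last := by
      intro h
      rw [h, hflast] at hic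
      exact hczero hic.symm
    have hupper : f i2 ≤ c := hic ▸ hi2_le ic hicne
    have hmemi2 : f i2 ∈ S := (hmem _).mpr ⟨i2, rfl⟩
    rcases Multiset.mem_cons.mp (hS ▸ hmemi2) with h0 | hT2
    · exfalso
      have hcount1 : Multiset.count (0:ℝ) S = 1 := by
        rw [hS, Multiset.count_cons_self]
        have : Multiset.count (0:ℝ) T = 0 := by
          apply Multiset.count_eq_zero.mpr
          intro hmem0
          have := hT 0 hmem0
          linarith
        omega
      have hsub : ({i2, last} : Finset (Fin N)) ⊆
          Finset.filter (fun a => (0:ℝ) = f a) Finset.univ := by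
        intro t ht
        rcases Finset.mem_insert.mp ht with h | h
        · subst h
          simp [h0.symm]
        · rw [Finset.mem_singleton] at h
          subst h
          simp [hflast.symm]
      have hcard2 : ({i2, last} : Finset (Fin N)).card = 2 := by
        rw [Finset.card_insert_of_notMem (by simpa using hi2last), Finset.card_singleton]
      have : 2 ≤ Multiset.count (0:ℝ) S := by
        rw [hcount_eq, ← hcard2]
        exact Finset.card_le_card hsub
      omega
    · exact le_antisymm hupper (hT _ hT2)

end SecondSmallest

section Remaining
open Polynomial

lemma listing_erase {N : ℕ} (hN : 2 ≤ N) (f : Fin N → ℝ) (hf : Antitone f)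
    (S : Multiset ℝ) (hSl : S = Multiset.map f Finset.univ.val)
    (h0 : (0:ℝ) ∈ S) (hpos : ∀ x ∈ S, (0:ℝ) ≤ x) :
    (f ⟨N - 2, by omega⟩) ∈ S.erase 0 ∧ (∀ x ∈ S.erase 0, f ⟨N - 2, by omega⟩ ≤ x) := by
  classical
  set last : Fin N := ⟨N - 1, by omega⟩ with hlastdef
  set i2 : Fin N := ⟨N - 2, by omega⟩ with hi2def
  have hlastval : (last : ℕ) = N - 1 := rfl
  have hi2val : (i2 : ℕ) = N - 2 := rfl
  have hi2last : i2 ≠ last := by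
    intro h
    have := congrArg Fin.val h
    rw [hi2val, hlastval] at this
    omega
  have hmem : ∀ x : ℝ, x ∈ S ↔ ∃ i, f i = x := by
    intro x
    rw [hSl]
    simp [Multiset.mem_map, List.mem_ofFn]
  have hlast_le : ∀ i, f last ≤ f i := by
    intro i
    apply hf
    rw [Fin.le_def, hlastval]
    have := i.isLt
    omega
  have hflast : f last = 0 := by
    obtain ⟨i0, hi0⟩ := (hmem 0).mp h0
    have h1 : f last ≤ 0 := hi0 ▸ hlast_le i0
    have h2 : 0 ≤ f last := hpos _ ((hmem _).mpr ⟨last, rfl⟩)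
    linarith
  have hi2_le : ∀ i, i ≠ last → f i2 ≤ f i := by
    intro i hi
    apply hf
    rw [Fin.le_def, hi2val]
    have h1 := i.isLt
    have h2 : (i : ℕ) ≠ N - 1 := by
      intro h
      apply hi
      apply Fin.ext
      rw [h, hlastval]
    omega
  have huniv : (Finset.univ : Finset (Fin N)).val = last ::ₘ ((Finset.univ.erase last).val) := by
    rw [Finset.erase_val]
    exact (Multiset.cons_erase (Finset.mem_val.mpr (Finset.mem_univ last))).symm
  have hScons : S = 0 ::ₘ Multiset.map f ((Finset.univ.erase last).val) := by
    rw [hSl, huniv, Multiset.map_cons, hflast]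
  have hSerase : S.erase 0 = Multiset.map f ((Finset.univ.erase last).val) := by
    rw [hScons, Multiset.erase_cons_head]
  constructor
  · rw [hSerase]
    apply Multiset.mem_map.mpr
    refine ⟨i2, ?_, rfl⟩
    exact Finset.mem_val.mpr (Finset.mem_erase.mpr ⟨hi2last, Finset.mem_univ _⟩)
  · intro x hx
    rw [hSerase] at hx
    obtain ⟨i, hi, rfl⟩ := Multiset.mem_map.mp hx
    exact hi2_le i (Finset.mem_erase.mp (Finset.mem_val.mp hi)).1

lemma card_powVert {α : Type u} [Fintype α] :
    ∀ k, Fintype.card (powVert α k) = Fintype.card α ^ k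
  | 0 => by simp [powVert]; rfl
  | 1 => by simp [powVert]; rfl
  | (k+2) => by
      have ih := card_powVert (α := α) (k+1)
      have : Fintype.card (powVert α (k+1) × α) =
          Fintype.card (powVert α (k+1)) * Fintype.card α := Fintype.card_prod _ _
      rw [show Fintype.card (powVert α (k+2)) =
          Fintype.card (powVert α (k+1) × α) from rfl, this, ih]
      ring

lemma lapSpectrum_subsingleton {V : Type u} [Fintype V] (G : SimpleGraph V)
    (h1 : Fintype.card V = 1) : lapSpectrum G = {0} := by
  letI : DecidableEq V := Classical.decEq V
  letI : DecidableRel G.Adj := Classical.decRel _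
  rw [lapSpectrum_def]
  have hsub : Subsingleton V := Fintype.card_le_one_iff_subsingleton.mp (by omega)
  have hL : G.lapMatrix ℝ = Matrix.diagonal (fun _ => (0:ℝ)) := by
    ext i j
    have hij : i = j := Subsingleton.elim i j
    subst hij
    have hdeg : G.degree i = 0 := by
      apply Finset.card_eq_zero.mpr
      ext w
      simp only [SimpleGraph.mem_neighborFinset, Finset.notMem_empty, iff_false]
      intro hadj
      rw [Subsingleton.elim w i] at hadj
      exact G.irrefl hadj
    simp [SimpleGraph.lapMatrix, SimpleGraph.degMatrix, hdeg]
  rw [hL, _root_.charpoly_diagonal]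
  have huniv : ∏ _i : V, ((X : ℝ[X]) - C (0:ℝ)) = X := by
    rw [Finset.prod_const, Finset.card_univ, h1, pow_one]
    simp
  rw [huniv, Polynomial.roots_X]

lemma degree_one_le {α : Type u} [Fintype α] [DecidableEq α] (H : SimpleGraph α)
    [DecidableRel H.Adj] (hconn : H.Connected) (hn2 : 2 ≤ Fintype.card α) (v : α) :
    1 ≤ H.degree v := by
  obtain ⟨w, hw⟩ := Fintype.exists_ne_of_one_lt_card (by omega) v
  obtain ⟨p⟩ := hconn.preconnected v w
  cases p with
  | nil => exact absurd rfl hw.symm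
  | cons h _ =>
    rw [Nat.succ_le_iff, SimpleGraph.degree_pos_iff_exists_adj]
    exact ⟨_, h⟩

lemma lexPow_deg_bound {α : Type u} [Fintype α] (H : SimpleGraph α) (a : ℝ) (ha : 0 ≤ a)
    (hray : ∀ y : α, a * ((Fintype.card α : ℝ) - 1) ≤ (Fintype.card α : ℝ) * (gdeg H y)) :
    ∀ m : ℕ, ∀ v : powVert α (m+1),
      ((Fintype.card α : ℝ) ^ (m+1) - 1) * a ≤
        (Fintype.card α : ℝ) * gdeg (lexPow H (m+1)) v := by
  intro m
  induction m with
  | zero =>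
    intro v
    have := hray v
    have heq : gdeg (lexPow H 1) v = gdeg H v := rfl
    rw [heq, pow_one]
    linarith
  | succ m ih =>
    rintro ⟨x, y⟩
    have hdeg : gdeg (lexPow H (m+2)) (x, y) =
        Fintype.card α * gdeg (lexPow H (m+1)) x + gdeg H y := by
      classical
      rw [gdeg_def, gdeg_def]
      exact (gdeg_def (lexProd (lexPow H (m+1)) H) (x, y)).trans
        (lexProd_degree (lexPow H (m+1)) H x y)
    rw [hdeg]
    have ihx := ih x
    have hrayy := hray y
    have hn0 : (0:ℝ) ≤ (Fintype.card α : ℝ) := by positivity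
    have h1' := mul_le_mul_of_nonneg_left ihx hn0
    have hpow : (Fintype.card α : ℝ) ^ (m+1+1) =
        (Fintype.card α : ℝ) * (Fintype.card α : ℝ) ^ (m+1) := by ring
    push_cast
    rw [hpow]
    linarith [h1', hrayy]

end Remaining

/-- The algebraic connectivity of `H^k`: if `nu : Fin (n^k) → ℝ` lists the
Laplacian eigenvalues of `H^k` in non-increasing order (so `nu i = μ_{i+1}(H^k)`), then the
second smallest one, `μ_{n^k - 1}(H^k)`, equals `n^(k-1)·μ_{n-1}(H)`. -/
theorem algebraicConnectivity_lexPow {α : Type u} [Fintype α]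
    (H : SimpleGraph α) (n : ℕ) (hn : Fintype.card α = n) (hconn : H.Connected)
    (muH : Fin n → ℝ) (hanti : Antitone muH)
    (hspec : lapSpectrum H = Multiset.map muH Finset.univ.val) :
    ∀ k : ℕ, 1 ≤ k →
      ∀ nu : Fin (n ^ k) → ℝ, Antitone nu →
        lapSpectrum (lexPow H k) = Multiset.map nu Finset.univ.val →
        nu ⟨n ^ k - 2, by
            have h0 : 0 < n := hn ▸ Fintype.card_pos_iff.mpr hconn.nonempty
            have h1 : 0 < n ^ k := pow_pos h0 k
            omega⟩ =
          (n : ℝ) ^ (k - 1) *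
            muH ⟨n - 2, by
              have h0 : 0 < n := hn ▸ Fintype.card_pos_iff.mpr hconn.nonempty
              omega⟩ := by
  classical
  intro k hk nu hnuanti hnuspec
  have hn0 : 0 < n := hn ▸ Fintype.card_pos_iff.mpr hconn.nonempty
  obtain ⟨k', rfl⟩ : ∃ k', k = k' + 1 := ⟨k - 1, by omega⟩
  by_cases hn1 : n = 1
  · have hcard1 : Fintype.card (powVert α (k' + 1)) = 1 := by
      rw [card_powVert, hn, hn1, one_pow]
    have hSp := lapSpectrum_subsingleton (lexPow H (k' + 1)) hcard1
    have hnu0 : ∀ i : Fin (n ^ (k' + 1)), nu i = 0 := by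
      intro i
      have hmem : nu i ∈ Multiset.map nu Finset.univ.val :=
        Multiset.mem_map_of_mem _ (Finset.mem_val.mpr (Finset.mem_univ _))
      rw [← hnuspec, hSp] at hmem
      simpa using hmem
    have hmu0 : ∀ i : Fin n, muH i = 0 := by
      intro i
      have hmem : muH i ∈ Multiset.map muH Finset.univ.val :=
        Multiset.mem_map_of_mem _ (Finset.mem_val.mpr (Finset.mem_univ _))
      rw [← hspec, lapSpectrum_subsingleton H (by rw [hn, hn1])] at hmem
      simpa using hmem
    rw [hnu0, hmu0, mul_zero]
  · have hn2 : 2 ≤ n := by omega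
    have hcard : Fintype.card α = n := hn
    obtain ⟨U, μ, j0, h1, h2, hdiag, hμj0, hnonneg, hμspec, hwz, hwn, hc0⟩ :=
      unitary_facts H hconn
    set S := lapSpectrum H with hSdef
    have huniv : (Finset.univ : Finset α).val = j0 ::ₘ ((Finset.univ.erase j0).val) := by
      rw [Finset.erase_val]
      exact (Multiset.cons_erase (Finset.mem_val.mpr (Finset.mem_univ j0))).symm
    have hMcons : S = 0 ::ₘ Multiset.map μ ((Finset.univ.erase j0).val) := by
      rw [hμspec, huniv, Multiset.map_cons, hμj0]
    have h0S : (0:ℝ) ∈ S := by rw [hMcons]; exact Multiset.mem_cons_self _ _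
    have hposS : ∀ x ∈ S, (0:ℝ) ≤ x := by
      intro x hx
      rw [hμspec] at hx
      obtain ⟨j, _, rfl⟩ := Multiset.mem_map.mp hx
      exact hnonneg j
    obtain ⟨haT, hbound⟩ := listing_erase hn2 muH hanti S hspec h0S hposS
    set a := muH ⟨n - 2, by omega⟩ with hadef
    have hTerase : Multiset.map μ ((Finset.univ.erase j0).val) = S.erase 0 := by
      rw [hMcons, Multiset.erase_cons_head]
    have hμbound : ∀ j, j ≠ j0 → a ≤ μ j := by
      intro j hj
      apply hbound
      rw [← hTerase]
      exact Multiset.mem_map_of_mem μ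
        (Finset.mem_val.mpr (Finset.mem_erase.mpr ⟨hj, Finset.mem_univ _⟩))
    have ha0 : 0 ≤ a := hposS _ (Multiset.mem_of_mem_erase haT)
    have hray : ∀ y : α,
        a * ((Fintype.card α : ℝ) - 1) ≤ (Fintype.card α : ℝ) * (gdeg H y) := by
      intro y
      have := rayleigh_bound H U μ j0 h2 hdiag hc0 a hμbound y
      rwa [gdeg_def]
    have hdegb := lexPow_deg_bound H a ha0 hray
    have key : ∀ m : ℕ, ∃ T : Multiset ℝ,
        lapSpectrum (lexPow H (m+1)) = 0 ::ₘ T ∧ ((n:ℝ)^m * a) ∈ T ∧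
        (∀ t ∈ T, (n:ℝ)^m * a ≤ t) := by
      intro m
      induction m with
      | zero =>
        refine ⟨S.erase 0, ?_, ?_, ?_⟩
        · show S = 0 ::ₘ S.erase 0
          calc S = 0 ::ₘ Multiset.map μ ((Finset.univ.erase j0).val) := hMcons
            _ = 0 ::ₘ S.erase 0 := by rw [hTerase]
        · rw [pow_zero, one_mul]
          exact haT
        · intro t ht
          rw [pow_zero, one_mul]
          exact hbound t ht
      | succ m ih =>
        obtain ⟨T, hT1, hT2, hT3⟩ := ih
        have hspec2 := lexProd_lapSpectrum (lexPow H (m+1)) H U μ j0 h1 hdiag hμj0 hwz hwn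
        rw [hT1, Multiset.map_cons, mul_zero, Multiset.cons_add] at hspec2
        refine ⟨_, hspec2, ?_, ?_⟩
        · apply Multiset.mem_add.mpr
          left
          apply Multiset.mem_map.mpr
          refine ⟨(n:ℝ)^m * a, hT2, ?_⟩
          rw [hcard]
          ring
        · intro t ht
          rcases Multiset.mem_add.mp ht with hcase | hcase
          · obtain ⟨s, hs, rfl⟩ := Multiset.mem_map.mp hcase
            have hle := hT3 s hs
            have hnn : (0:ℝ) ≤ (n:ℝ) := by positivity
            calc (n:ℝ)^(m+1) * a = (n:ℝ) * ((n:ℝ)^m * a) := by ring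
              _ ≤ (n:ℝ) * s := mul_le_mul_of_nonneg_left hle hnn
              _ = (Fintype.card α : ℝ) * s := by rw [hcard]
          · obtain ⟨j, hj, hmem2⟩ := Multiset.mem_bind.mp hcase
            obtain ⟨x, hx, rfl⟩ := Multiset.mem_map.mp hmem2
            have hjne : j ≠ j0 := (Finset.mem_erase.mp (Finset.mem_val.mp hj)).1
            have hμj : a ≤ μ j := hμbound j hjne
            have hdx := hdegb m x
            rw [hcard, gdeg_def] at hdx
            rw [hcard]
            linarith [hdx, hμj]
    obtain ⟨T, hT1, hT2, hT3⟩ := key k'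
    have hN2 : 2 ≤ n ^ (k' + 1) := by
      calc 2 ≤ n := hn2
        _ = n ^ 1 := (pow_one n).symm
        _ ≤ n ^ (k' + 1) := Nat.pow_le_pow_right (by omega) (by omega)
    have hfin := second_smallest hN2 nu hnuanti T ((n:ℝ)^(k'+1-1) * a)
      (by rw [← hnuspec]; exact hT1)
      (by simpa using hT2) (by simpa using hT3)
      (by have : (0:ℝ) ≤ (n:ℝ)^(k'+1-1) := by positivity
          exact mul_nonneg this ha0)
    exact hfin
end

section
/- Let H be a connected graph of order n that is not complete. Then for every integer k ≥ 1, the vertex connectivity of the lexicographic power H^k satisfies υ(H^k) = n^{k−1}·υ(H). -/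
open Matrix Finset

universe u

/-- The vertex connectivity of a graph: the minimum number of vertices whose removal
yields a disconnected graph. -/
noncomputable def vertConn {α : Type u} [Fintype α] (G : SimpleGraph α) : ℕ :=
  sInf {r | ∃ s : Finset α, s.card = r ∧ ¬ (G.induce ((↑s : Set α)ᶜ)).Connected}

section helpers
variable {α : Type u} [Fintype α] {G : SimpleGraph α}

lemma reachable_of_map {V W : Type u} {G : SimpleGraph V} {G' : SimpleGraph W} (f : V → W)
    (hf : ∀ a b, G.Adj a b → G'.Adj (f a) (f b) ∨ f a = f b) {a b : V}
    (h : G.Reachable a b) : G'.Reachable (f a) (f b) := by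
  obtain ⟨w⟩ := h
  induction w with
  | nil => exact SimpleGraph.Reachable.refl _
  | cons h w ih =>
    rcases hf _ _ h with h' | h'
    · exact (h'.reachable).trans ih
    · rw [h']; exact ih

lemma vertConn_le_of (s : Finset α) (h : ¬ (G.induce ((↑s : Set α)ᶜ)).Connected) :
    vertConn G ≤ s.card := Nat.sInf_le ⟨s, rfl, h⟩

lemma not_connected_univ : ¬ (G.induce ((↑(univ : Finset α) : Set α)ᶜ)).Connected := by
  intro h
  obtain ⟨⟨v, hv⟩⟩ := h.nonempty
  simp at hv

lemma exists_min_cut :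
    ∃ s : Finset α, s.card = vertConn G ∧ ¬ (G.induce ((↑s : Set α)ᶜ)).Connected := by
  have hne : {r | ∃ s : Finset α, s.card = r ∧ ¬ (G.induce ((↑s : Set α)ᶜ)).Connected}.Nonempty :=
    ⟨(univ : Finset α).card, univ, rfl, not_connected_univ⟩
  obtain ⟨s, hs, hd⟩ := Nat.sInf_mem hne
  exact ⟨s, hs, hd⟩

lemma connected_of_card_lt (s : Finset α) (h : s.card < vertConn G) :
    (G.induce ((↑s : Set α)ᶜ)).Connected := by
  by_contra hc
  exact absurd (vertConn_le_of s hc) (by omega)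

lemma vertConn_le_card_sub_two (h : ∃ a b : α, a ≠ b ∧ ¬ G.Adj a b) :
    vertConn G ≤ Fintype.card α - 2 := by
  classical
  obtain ⟨a, b, hab, hnadj⟩ := h
  have hsub : ({a, b} : Finset α) ⊆ univ := subset_univ _
  have hcard : (univ \ ({a, b} : Finset α)).card = Fintype.card α - 2 := by
    rw [card_sdiff_of_subset hsub, card_univ, card_pair hab]
  rw [← hcard]
  apply vertConn_le_of
  intro hc
  have ha : a ∈ ((↑(univ \ ({a, b} : Finset α)) : Set α)ᶜ) := by simp
  have hb : b ∈ ((↑(univ \ ({a, b} : Finset α)) : Set α)ᶜ) := by simp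
  obtain ⟨w⟩ := hc.preconnected ⟨a, ha⟩ ⟨b, hb⟩
  cases w with
  | nil => exact hab rfl
  | @cons _ c _ hadj _ =>
    have hc2 := c.2
    have hadj' : G.Adj a (c : α) := hadj
    have : (c : α) = a ∨ (c : α) = b := by
      by_contra hcc
      push_neg at hcc
      simp [hcc.1, hcc.2] at hc2
    rcases this with h' | h'
    · rw [h'] at hadj'; exact G.irrefl hadj'
    · rw [h'] at hadj'; exact hnadj hadj'

end helpers

section main
variable {α β : Type u} [Fintype α] [Fintype β]

lemma vertConn_lexProd (G : SimpleGraph α) (H : SimpleGraph β) [Nonempty β]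
    (hnc : ∃ a b : α, a ≠ b ∧ ¬ G.Adj a b) :
    vertConn (lexProd G H) = vertConn G * Fintype.card β := by
  classical
  apply le_antisymm
  · -- upper bound
    obtain ⟨s, hcard, hdis⟩ := exists_min_cut (G := G)
    have hcard' : (s ×ˢ (univ : Finset β)).card = vertConn G * Fintype.card β := by
      rw [card_product, hcard, card_univ]
    rw [← hcard']
    apply vertConn_le_of
    intro h
    apply hdis
    have hmem : ∀ p : α × β, p ∈ ((↑(s ×ˢ (univ : Finset β)) : Set (α × β))ᶜ) ↔ p.1 ∉ s := by
      intro p; simp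
    have hne : Nonempty ((↑s : Set α)ᶜ : Set α) := by
      obtain ⟨⟨p, hp⟩⟩ := h.nonempty
      exact ⟨⟨p.1, (hmem _).1 hp⟩⟩
    refine SimpleGraph.Connected.mk ?_
    · intro ⟨x1, hx1⟩ ⟨x2, hx2⟩
      have hx1' : x1 ∉ s := hx1
      have hx2' : x2 ∉ s := hx2
      obtain ⟨y0⟩ := ‹Nonempty β›
      have r := h.preconnected ⟨(x1, y0), (hmem _).2 hx1'⟩ ⟨(x2, y0), (hmem _).2 hx2'⟩
      have := reachable_of_map
        (G := (lexProd G H).induce ((↑(s ×ˢ (univ : Finset β)) : Set (α × β))ᶜ))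
        (G' := G.induce ((↑s : Set α)ᶜ))
        (fun p => ⟨p.val.1, (hmem _).1 p.2⟩)
        (by
          intro a b hab
          rcases hab with h' | ⟨h', _⟩
          · exact Or.inl h'
          · exact Or.inr (Subtype.ext h')) r
      exact this
  · -- lower bound
    obtain ⟨t, hcard, hdis⟩ := exists_min_cut (G := lexProd G H)
    rw [← hcard]
    by_contra hlt
    push_neg at hlt
    apply hdis
    set n := Fintype.card β with hn
    set κ := vertConn G with hκ
    have hnpos : 0 < n := Fintype.card_pos
    set S : Finset α := univ.filter (fun x => ∀ y, (x, y) ∈ t) with hS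
    have hSmem : ∀ x : α, x ∈ S ↔ ∀ y, (x, y) ∈ t := by
      intro x; simp [hS]
    have hsub : S ×ˢ (univ : Finset β) ⊆ t := by
      intro p hp
      rw [mem_product] at hp
      have := (hSmem p.1).1 hp.1 p.2
      simpa using this
    have hScard : S.card * n ≤ t.card := by
      calc S.card * n = (S ×ˢ (univ : Finset β)).card := by rw [card_product, card_univ]
      _ ≤ t.card := card_le_card hsub
    have hSlt : S.card < κ := by
      have : S.card * n < κ * n := lt_of_le_of_lt hScard hlt
      exact lt_of_mul_lt_mul_right this (le_of_lt hnpos)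
    have hSconn : (G.induce ((↑S : Set α)ᶜ)).Connected := connected_of_card_lt S hSlt
    have hsurv : ∀ x : α, x ∉ S → ∃ y, (x, y) ∉ t := by
      intro x hx
      by_contra hc
      push_neg at hc
      exact hx ((hSmem x).2 hc)
    have hnotS : ∀ x y, (x, y) ∉ t → x ∉ S := by
      intro x y hxy hx
      exact hxy ((hSmem x).1 hx y)
    have hκle : κ ≤ Fintype.card α - 2 := vertConn_le_card_sub_two hnc
    -- every surviving column has a surviving neighbor column
    have hnbr : ∀ x : α, x ∉ S → ∃ x', G.Adj x x' ∧ x' ∉ S := by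
      intro x hx
      by_contra hc
      push_neg at hc
      have hiso : ∀ z : α, z ∉ S → z = x := by
        intro z hz
        obtain ⟨w⟩ := hSconn.preconnected ⟨x, hx⟩ ⟨z, hz⟩
        cases w with
        | nil => rfl
        | @cons _ c _ hadj _ =>
          have hc2 : (c : α) ∉ S := c.2
          have hadj' : G.Adj x (c : α) := hadj
          exact absurd (hc _ hadj') hc2
      have hsub1 : (Sᶜ : Finset α) ⊆ {x} := by
        intro z hz
        rw [mem_compl] at hz
        rw [mem_singleton]
        exact hiso z hz
      have hle1 : (Sᶜ : Finset α).card ≤ 1 := by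
        calc (Sᶜ : Finset α).card ≤ ({x} : Finset α).card := card_le_card hsub1
        _ = 1 := card_singleton x
      rw [card_compl] at hle1
      omega
    -- same-column reachability
    have hcol : ∀ (x : α) (y1 y2 : β) (h1 : (x, y1) ∈ ((↑t : Set (α × β))ᶜ))
        (h2 : (x, y2) ∈ ((↑t : Set (α × β))ᶜ)),
        ((lexProd G H).induce ((↑t : Set (α × β))ᶜ)).Reachable ⟨(x, y1), h1⟩ ⟨(x, y2), h2⟩ := by
      intro x y1 y2 h1 h2
      obtain ⟨x', hadj, hx'S⟩ := hnbr x (hnotS x y1 h1)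
      obtain ⟨w, hw⟩ := hsurv x' hx'S
      have hw' : (x', w) ∈ ((↑t : Set (α × β))ᶜ) := hw
      have e1 : ((lexProd G H).induce ((↑t : Set (α × β))ᶜ)).Adj ⟨(x, y1), h1⟩ ⟨(x', w), hw'⟩ :=
        Or.inl hadj
      have e2 : ((lexProd G H).induce ((↑t : Set (α × β))ᶜ)).Adj ⟨(x', w), hw'⟩ ⟨(x, y2), h2⟩ :=
        Or.inl hadj.symm
      exact e1.reachable.trans e2.reachable
    -- walk-based reachability
    have key : ∀ (a b : ((↑S : Set α)ᶜ : Set α)) (w : (G.induce ((↑S : Set α)ᶜ)).Walk a b)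
        (y1 y2 : β) (h1 : ((a : α), y1) ∈ ((↑t : Set (α × β))ᶜ))
        (h2 : ((b : α), y2) ∈ ((↑t : Set (α × β))ᶜ)),
        ((lexProd G H).induce ((↑t : Set (α × β))ᶜ)).Reachable ⟨((a : α), y1), h1⟩
          ⟨((b : α), y2), h2⟩ := by
      intro a b w
      induction w with
      | nil => intro y1 y2 h1 h2; exact hcol _ y1 y2 h1 h2
      | @cons u v b hadj w ih =>
        intro y1 y2 h1 h2
        obtain ⟨w', hw⟩ := hsurv (v : α) v.2
        have hw' : ((v : α), w') ∈ ((↑t : Set (α × β))ᶜ) := hw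
        have step : ((lexProd G H).induce ((↑t : Set (α × β))ᶜ)).Adj ⟨((u : α), y1), h1⟩
            ⟨((v : α), w'), hw'⟩ := Or.inl hadj
        exact step.reachable.trans (ih w' y2 hw' h2)
    -- conclude connectivity
    have hne : Nonempty ((↑t : Set (α × β))ᶜ : Set (α × β)) := by
      have hlt2 : t.card < Fintype.card (α × β) := by
        calc t.card < κ * n := hlt
        _ ≤ Fintype.card α * n := Nat.mul_le_mul_right n (le_trans hκle (Nat.sub_le _ _))
        _ = Fintype.card (α × β) := by rw [Fintype.card_prod, hn]
      have : 0 < (tᶜ : Finset (α × β)).card := by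
        rw [card_compl]; omega
      obtain ⟨p, hp⟩ := card_pos.1 this
      rw [mem_compl] at hp
      exact ⟨⟨p, hp⟩⟩
    refine SimpleGraph.Connected.mk ?_
    rintro ⟨⟨x1, y1⟩, h1⟩ ⟨⟨x2, y2⟩, h2⟩
    have hx1 : x1 ∉ S := hnotS x1 y1 h1
    have hx2 : x2 ∉ S := hnotS x2 y2 h2
    obtain ⟨w⟩ := hSconn.preconnected ⟨x1, hx1⟩ ⟨x2, hx2⟩
    exact key ⟨x1, hx1⟩ ⟨x2, hx2⟩ w y1 y2 h1 h2

lemma connected_lexProd (G : SimpleGraph α) (H : SimpleGraph β)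
    (hG : G.Connected) (hH : H.Connected) : (lexProd G H).Connected := by
  have : Nonempty α := hG.nonempty
  have : Nonempty β := hH.nonempty
  refine SimpleGraph.Connected.mk ?_
  rintro ⟨x1, y1⟩ ⟨x2, y2⟩
  have r1 : (lexProd G H).Reachable (x1, y1) (x2, y1) :=
    reachable_of_map (G := G) (fun x => (x, y1))
      (fun a b hab => Or.inl (Or.inl hab)) (hG.preconnected x1 x2)
  have r2 : (lexProd G H).Reachable (x2, y1) (x2, y2) :=
    reachable_of_map (G := H) (fun y => (x2, y))
      (fun a b hab => Or.inl (Or.inr ⟨rfl, hab⟩)) (hH.preconnected y1 y2)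
  exact r1.trans r2

lemma lexProd_pair (G : SimpleGraph α) (H : SimpleGraph β) [Nonempty α]
    (hnc : ∃ a b : β, a ≠ b ∧ ¬ H.Adj a b) :
    ∃ p q : α × β, p ≠ q ∧ ¬ (lexProd G H).Adj p q := by
  obtain ⟨a, b, hab, hnadj⟩ := hnc
  obtain ⟨x⟩ := ‹Nonempty α›
  refine ⟨(x, a), (x, b), fun h => hab (congrArg Prod.snd h), ?_⟩
  rintro (h | ⟨-, h⟩)
  · exact G.irrefl h
  · exact hnadj h

end main

/-- The vertex connectivity of the lexicographic power of a connected
non-complete graph `H` of order `n`: `υ(H^k) = n^(k-1)·υ(H)`. -/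
theorem vertConn_lexPow {α : Type u} [Fintype α]
    (H : SimpleGraph α) (n : ℕ) (hn : Fintype.card α = n)
    (hconn : H.Connected) (hnc : H ≠ ⊤) :
    ∀ k : ℕ, 1 ≤ k → vertConn (lexPow H k) = n ^ (k - 1) * vertConn H := by
  classical
  have hpair : ∃ a b : α, a ≠ b ∧ ¬ H.Adj a b := by
    by_contra hc
    push_neg at hc
    apply hnc
    ext a b
    simp only [SimpleGraph.top_adj]
    exact ⟨fun h => h.ne, fun h => hc a b h⟩
  have hna : Nonempty α := hconn.nonempty
  have hnePow : ∀ k, Nonempty (powVert α (k + 1)) := by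
    intro k
    induction k with
    | zero => exact hna
    | succ k ih => exact ⟨(ih.some, Classical.arbitrary α)⟩
  have hpairPow : ∀ k, ∃ p q : powVert α (k + 1), p ≠ q ∧ ¬ (lexPow H (k + 1)).Adj p q := by
    intro k
    induction k with
    | zero => exact hpair
    | succ k ih =>
      have := hnePow k
      exact lexProd_pair (lexPow H (k + 1)) H hpair
  have main : ∀ k, vertConn (lexPow H (k + 1)) = n ^ k * vertConn H := by
    intro k
    induction k with
    | zero => rw [pow_zero, one_mul]; rfl
    | succ k ih =>
      have hthis := vertConn_lexProd (lexPow H (k + 1)) H (hpairPow k)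
      calc vertConn (lexPow H (k + 2)) = vertConn (lexPow H (k + 1)) * Fintype.card α := hthis
      _ = (n ^ k * vertConn H) * n := by rw [ih, hn]
      _ = n ^ (k + 1) * vertConn H := by ring
  intro k hk
  obtain ⟨j, rfl⟩ : ∃ j, k = j + 1 := ⟨k - 1, by omega⟩
  simpa using main j
end
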